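/- arXiv:2110.09411 — 8 statements merged into one kernel-verified Lean document; each statement's English description precedes it below -/
import Mathlib

section
/- For all n, v ∈ ℕ₀ and all x, k, z ∈ ℂ, _Tℬ^{(s,v)}_{n,μ}(x+k,z;λ) = Σ_{r=0}^{n} binomial(n,r) · ℬ^{(s,v)}_{n−r,μ}(x,z;λ) · T_r(k). -/
/-!
Parametric kinds of generalized Apostol–Bernoulli polynomials (Özat–Çekim–Kızılateş–Qi).
All generating functions are formal power series in `t` over `ℂ`; each polynomial family is
`n!` times the `n`-th coefficient of its generating series.
-/

open PowerSeries

noncomputable section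

/-- The formal power series `t / (λ eᵗ + μ)`. -/
def bker (lam mu : ℂ) : ℂ⟦X⟧ := X * (C lam * exp ℂ + C mu)⁻¹

/-- The formal power series `e^{x t}`. -/
def expS (x : ℂ) : ℂ⟦X⟧ := rescale x (exp ℂ)

/-- The formal power series `cos (z t)`. -/
def cosS (z : ℂ) : ℂ⟦X⟧ := rescale z (cos ℂ)

/-- The formal power series `sin (z t)`. -/
def sinS (z : ℂ) : ℂ⟦X⟧ := rescale z (sin ℂ)

/-- Parametric (cosine) kind of generalized Apostol–Bernoulli polynomials
`_Tℬ^{(c,v)}_{n,μ}(x,z;λ)`, defined by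
`(t/(λeᵗ+μ))^v e^{xt} U(t) cos(zt) = Σ_n _Tℬ^{(c,v)}_{n,μ}(x,z;λ) tⁿ/n!`. -/
def TBc (lam mu : ℂ) (U : ℂ⟦X⟧) (v n : ℕ) (x z : ℂ) : ℂ :=
  n.factorial * coeff n (bker lam mu ^ v * expS x * U * cosS z)

/-- Parametric (sine) kind of generalized Apostol–Bernoulli polynomials
`_Tℬ^{(s,v)}_{n,μ}(x,z;λ)`, defined by
`(t/(λeᵗ+μ))^v e^{xt} U(t) sin(zt) = Σ_n _Tℬ^{(s,v)}_{n,μ}(x,z;λ) tⁿ/n!`. -/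
def TBs (lam mu : ℂ) (U : ℂ⟦X⟧) (v n : ℕ) (x z : ℂ) : ℂ :=
  n.factorial * coeff n (bker lam mu ^ v * expS x * U * sinS z)

/-- `_Tℬ^{(v)}_{n,μ}(x;λ)`, defined by
`(t/(λeᵗ+μ))^v e^{xt} U(t) = Σ_n _Tℬ^{(v)}_{n,μ}(x;λ) tⁿ/n!`. -/
def TB (lam mu : ℂ) (U : ℂ⟦X⟧) (v n : ℕ) (x : ℂ) : ℂ :=
  n.factorial * coeff n (bker lam mu ^ v * expS x * U)

/-- Cosine generalized Apostol–Bernoulli polynomials `ℬ^{(c,v)}_{n,μ}(x,z;λ)`, defined by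
`(t/(λeᵗ+μ))^v e^{xt} cos(zt) = Σ_n ℬ^{(c,v)}_{n,μ}(x,z;λ) tⁿ/n!`. -/
def Bc (lam mu : ℂ) (v n : ℕ) (x z : ℂ) : ℂ :=
  n.factorial * coeff n (bker lam mu ^ v * expS x * cosS z)

/-- Sine generalized Apostol–Bernoulli polynomials `ℬ^{(s,v)}_{n,μ}(x,z;λ)`. -/
def Bs (lam mu : ℂ) (v n : ℕ) (x z : ℂ) : ℂ :=
  n.factorial * coeff n (bker lam mu ^ v * expS x * sinS z)

/-- Generalized Apostol–Bernoulli polynomials of order `v`: `ℬ^{(v)}_{n,μ}(x;λ)`, defined by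
`(t/(λeᵗ+μ))^v e^{xt} = Σ_n ℬ^{(v)}_{n,μ}(x;λ) tⁿ/n!`. -/
def Bpoly (lam mu : ℂ) (v n : ℕ) (x : ℂ) : ℂ :=
  n.factorial * coeff n (bker lam mu ^ v * expS x)

/-- Generalized Apostol–Bernoulli numbers `ℬ^{(v)}_{n,μ}(λ) := ℬ^{(v)}_{n,μ}(0;λ)`. -/
def Bnum (lam mu : ℂ) (v n : ℕ) : ℂ := Bpoly lam mu v n 0

/-- The 2-variable general polynomials `T_n(x)`, defined by `e^{xt} U(t) = Σ_n T_n(x) tⁿ/n!`. -/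
def Tpoly (U : ℂ⟦X⟧) (n : ℕ) (x : ℂ) : ℂ := n.factorial * coeff n (expS x * U)

/-- `U_n := n!` times the `n`-th coefficient of `U`. -/
def Unum (U : ℂ⟦X⟧) (n : ℕ) : ℂ := n.factorial * coeff n U

/-- `C_n(x,y)`, defined by `e^{xt} cos(yt) = Σ_n C_n(x,y) tⁿ/n!`. -/
def Cpoly (n : ℕ) (x y : ℂ) : ℂ := n.factorial * coeff n (expS x * cosS y)

/-- `S_n(x,y)`, defined by `e^{xt} sin(yt) = Σ_n S_n(x,y) tⁿ/n!`. -/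
def Spoly (n : ℕ) (x y : ℂ) : ℂ := n.factorial * coeff n (expS x * sinS y)

/-- Apostol–Bernoulli numbers of order `δ`: `ℬ^{(δ)}_n(Λ)`, defined by
`(t/(Λeᵗ−1))^δ = Σ_n ℬ^{(δ)}_n(Λ) tⁿ/n!`. -/
def ABnum (L : ℂ) (d n : ℕ) : ℂ :=
  n.factorial * coeff n ((X * (C L * exp ℂ - 1)⁻¹) ^ d)

/-- Generalized Apostol–Genocchi polynomials `𝒢^{(v)}_{n,μ}(x;λ)`, defined by
`(2t/(λeᵗ+μ))^v e^{xt} = Σ_n 𝒢^{(v)}_{n,μ}(x;λ) tⁿ/n!`. -/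
def Gpoly (lam mu : ℂ) (v n : ℕ) (x : ℂ) : ℂ :=
  n.factorial * coeff n ((C 2 * X * (C lam * exp ℂ + C mu)⁻¹) ^ v * expS x)

end

theorem stmt5 (lam mu : ℂ) (hlm : lam + mu ≠ 0) (U : ℂ⟦X⟧) (hU : PowerSeries.coeff 0 U ≠ 0)
    (n v : ℕ) (x k z : ℂ) :
    TBs lam mu U v n (x + k) z
      = ∑ r ∈ Finset.range (n + 1),
          (n.choose r : ℂ) * Bs lam mu v (n - r) x z * Tpoly U r k := by
  have hexp : expS (x + k) = expS x * expS k := by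
    rw [expS, expS, expS, ← PowerSeries.exp_mul_exp_eq_exp_add]
  have key : bker lam mu ^ v * expS (x + k) * U * sinS z
      = (expS k * U) * (bker lam mu ^ v * expS x * sinS z) := by
    rw [hexp]; ring
  rw [TBs, key, PowerSeries.coeff_mul,
    Finset.Nat.sum_antidiagonal_eq_sum_range_succ_mk, Finset.mul_sum]
  refine Finset.sum_congr rfl fun r hr => ?_
  have hrn : r ≤ n := Nat.lt_succ_iff.mp (Finset.mem_range.mp hr)
  rw [Bs, Tpoly]
  have hfac : (n.factorial : ℂ)
      = (n.choose r : ℂ) * ((n - r).factorial : ℂ) * (r.factorial : ℂ) := by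
    rw [← Nat.cast_mul, ← Nat.cast_mul, ← Nat.choose_mul_factorial_mul_factorial hrn]
    push_cast; ring
  rw [hfac]; ring
end

section
/- For all n, r, v ∈ ℕ₀ and all ω, x, z ∈ ℂ, the two-index summation formula _Tℬ^{(c,v)}_{n+r,μ}(ω,z;λ) = Σ_{ℓ=0}^{n} Σ_{m=0}^{r} binomial(n,ℓ) · binomial(r,m) · (ω−x)^{ℓ+m} · _Tℬ^{(c,v)}_{n+r−ℓ−m,μ}(x,z;λ) holds. -/
/-!
Parametric kinds of generalized Apostol–Bernoulli polynomials (Özat–Çekim–Kızılateş–Qi).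
All generating functions are formal power series in `t` over `ℂ`; each polynomial family is
`n!` times the `n`-th coefficient of its generating series.
-/

open PowerSeries

theorem stmt6 (lam mu : ℂ) (hlm : lam + mu ≠ 0) (U : ℂ⟦X⟧) (hU : PowerSeries.coeff 0 U ≠ 0)
    (n r v : ℕ) (ω x z : ℂ) :
    TBc lam mu U v (n + r) ω z
      = ∑ l ∈ Finset.range (n + 1), ∑ m ∈ Finset.range (r + 1),
          (n.choose l : ℂ) * (r.choose m : ℂ) * (ω - x) ^ (l + m) *
            TBc lam mu U v (n + r - l - m) x z := by
  classical
  set N := n + r with hN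
  set G : ℂ⟦X⟧ := bker lam mu ^ v * expS x * U * cosS z with hG
  set f : ℕ × ℕ → ℂ := fun p =>
    (n.choose p.1 : ℂ) * (r.choose p.2 : ℂ) * (ω - x) ^ (p.1 + p.2) *
      TBc lam mu U v (N - p.1 - p.2) x z with hf
  have hprod : bker lam mu ^ v * expS ω * U * cosS z = expS (ω - x) * G := by
    have h1 : expS ω = expS (ω - x) * expS x := by
      rw [expS, expS, expS, PowerSeries.exp_mul_exp_eq_exp_add, sub_add_cancel]
    rw [hG, h1]; ring
  have hcoeff : ∀ k : ℕ, coeff k (expS (ω - x)) = (ω - x) ^ k * (k.factorial : ℂ)⁻¹ := by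
    intro k
    rw [expS, coeff_rescale, coeff_exp]
    simp
  have stepA : TBc lam mu U v N ω z
      = ∑ k ∈ Finset.range (N + 1), (N.choose k : ℂ) * (ω - x) ^ k
          * TBc lam mu U v (N - k) x z := by
    rw [TBc, hprod, coeff_mul, Finset.Nat.sum_antidiagonal_eq_sum_range_succ_mk,
      Finset.mul_sum]
    refine Finset.sum_congr rfl fun k hk => ?_
    have hkN : k ≤ N := Nat.lt_succ_iff.mp (Finset.mem_range.mp hk)
    rw [hcoeff, TBc]
    have hfact : (N.factorial : ℂ) = (N.choose k : ℂ) * k.factorial * (N - k).factorial := by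
      rw_mod_cast [Nat.choose_mul_factorial_mul_factorial hkN]
    have hk0 : (k.factorial : ℂ) ≠ 0 := Nat.cast_ne_zero.mpr k.factorial_ne_zero
    rw [hfact]
    field_simp
    ring
  have stepB : TBc lam mu U v N ω z
      = ∑ k ∈ Finset.range (N + 1), ∑ p ∈ Finset.HasAntidiagonal.antidiagonal k, f p := by
    rw [stepA]
    refine Finset.sum_congr rfl fun k _ => ?_
    have : ((N.choose k : ℕ) : ℂ)
        = ∑ p ∈ Finset.HasAntidiagonal.antidiagonal k, (n.choose p.1 : ℂ) * (r.choose p.2 : ℂ) := by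
      rw [hN, Nat.add_choose_eq]
      push_cast
      rfl
    rw [this, Finset.sum_mul, Finset.sum_mul]
    refine Finset.sum_congr rfl fun p hp => ?_
    have hpk : p.1 + p.2 = k := Finset.HasAntidiagonal.mem_antidiagonal.mp hp
    simp only [hf, Nat.sub_sub, hpk]
  have stepC : ∑ k ∈ Finset.range (N + 1), ∑ p ∈ Finset.HasAntidiagonal.antidiagonal k, f p
      = ∑ p ∈ (Finset.range (N + 1)).biUnion Finset.HasAntidiagonal.antidiagonal, f p := by
    refine (Finset.sum_biUnion ?_).symm
    intro a _ b _ hab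
    refine Finset.disjoint_left.mpr fun p hpa hpb => hab ?_
    rw [← Finset.HasAntidiagonal.mem_antidiagonal.mp hpa, Finset.HasAntidiagonal.mem_antidiagonal.mp hpb]
  have stepD : ∑ p ∈ (Finset.range (N + 1)).biUnion Finset.HasAntidiagonal.antidiagonal, f p
      = ∑ p ∈ Finset.range (n + 1) ×ˢ Finset.range (r + 1), f p := by
    refine (Finset.sum_subset ?_ ?_).symm
    · intro p hp
      rw [Finset.mem_product, Finset.mem_range, Finset.mem_range] at hp
      refine Finset.mem_biUnion.mpr ⟨p.1 + p.2, ?_, Finset.HasAntidiagonal.mem_antidiagonal.mpr rfl⟩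
      rw [Finset.mem_range, hN]
      omega
    · intro p _ hp
      rw [Finset.mem_product, Finset.mem_range, Finset.mem_range] at hp
      push_neg at hp
      rw [hf]
      rcases Nat.lt_or_ge n p.1 with h | h
      · simp [Nat.choose_eq_zero_of_lt h]
      · simp [Nat.choose_eq_zero_of_lt (hp (by omega))]
  rw [stepB, stepC, stepD, Finset.sum_product]
end

section
/- For all v, α, n ∈ ℕ₀ and all x, z ∈ ℂ, the order-addition formula _Tℬ^{(s,v+α)}_{n,μ}(x,z;λ) = Σ_{r=0}^{n} binomial(n,r) · ℬ^{(v)}_{r,μ}(λ) · _Tℬ^{(s,α)}_{n−r,μ}(x,z;λ) holds. -/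
/-!
Parametric kinds of generalized Apostol–Bernoulli polynomials (Özat–Çekim–Kızılateş–Qi).
All generating functions are formal power series in `t` over `ℂ`; each polynomial family is
`n!` times the `n`-th coefficient of its generating series.
-/

open PowerSeries

theorem stmt8 (lam mu : ℂ) (hlm : lam + mu ≠ 0) (U : ℂ⟦X⟧) (hU : PowerSeries.coeff 0 U ≠ 0)
    (v α n : ℕ) (x z : ℂ) :
    TBs lam mu U (v + α) n x z
      = ∑ r ∈ Finset.range (n + 1),
          (n.choose r : ℂ) * Bnum lam mu v r * TBs lam mu U α (n - r) x z := by
  have hexp0 : expS (0:ℂ) = 1 := by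
    simp [expS, rescale_zero]
  have key : bker lam mu ^ (v + α) * expS x * U * sinS z
      = bker lam mu ^ v * (bker lam mu ^ α * expS x * U * sinS z) := by
    rw [pow_add]; ring
  unfold TBs Bnum Bpoly
  rw [key, coeff_mul,
    Finset.Nat.sum_antidiagonal_eq_sum_range_succ
      (fun i j => coeff i (bker lam mu ^ v)
        * coeff j (bker lam mu ^ α * expS x * U * sinS z)),
    Finset.mul_sum]
  apply Finset.sum_congr rfl
  intro r hr
  have hr' : r ≤ n := Nat.lt_succ_iff.mp (Finset.mem_range.mp hr)
  rw [hexp0, mul_one]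
  have hfac : ((n.choose r : ℂ)) * r.factorial * (n - r).factorial = n.factorial := by
    exact_mod_cast congrArg Nat.cast (Nat.choose_mul_factorial_mul_factorial hr')
  calc (n.factorial : ℂ) * (coeff r (bker lam mu ^ v)
        * coeff (n - r) (bker lam mu ^ α * expS x * U * sinS z))
      = ((n.choose r : ℂ) * r.factorial * (n - r).factorial) * (coeff r (bker lam mu ^ v)
        * coeff (n - r) (bker lam mu ^ α * expS x * U * sinS z)) := by rw [hfac]
    _ = _ := by ring
end

section
/- For all v, β, n ∈ ℕ₀ and all x, z ∈ ℂ, the double-angle convolution identity Σ_{r=0}^{n} binomial(n,r) · ℬ^{(v)}_{n−r,μ}(x;λ) · _Tℬ^{(s,β)}_{r,μ}(x,2z;λ) = 2 · Σ_{r=0}^{n} binomial(n,r) · ℬ^{(s,v)}_{r,μ}(x,z;λ) · _Tℬ^{(c,β)}_{n−r,μ}(x,z;λ) holds. -/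
/-!
Parametric kinds of generalized Apostol–Bernoulli polynomials (Özat–Çekim–Kızılateş–Qi).
All generating functions are formal power series in `t` over `ℂ`; each polynomial family is
`n!` times the `n`-th coefficient of its generating series.
-/

open PowerSeries

lemma conv_aux (f g : ℂ⟦X⟧) (n : ℕ) :
    ∑ r ∈ Finset.range (n + 1),
        (n.choose r : ℂ) * (r.factorial * coeff r f) * ((n - r).factorial * coeff (n - r) g)
      = n.factorial * coeff n (f * g) := by
  rw [coeff_mul, Finset.Nat.sum_antidiagonal_eq_sum_range_succ_mk, Finset.mul_sum]
  refine Finset.sum_congr rfl fun r hr => ?_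
  have h := Nat.choose_mul_factorial_mul_factorial (Finset.mem_range_succ_iff.mp hr)
  have h' : (n.choose r : ℂ) * r.factorial * (n - r).factorial = n.factorial := by
    exact_mod_cast congrArg (Nat.cast : ℕ → ℂ) h
  linear_combination (coeff r f * coeff (n - r) g) * h'

lemma rescale_C_eq (a c : ℂ) : rescale a (C c) = C c := by
  ext n
  rw [coeff_rescale, coeff_C]
  split_ifs with h
  · subst h; simp
  · simp

lemma rescale_C_mul (a c : ℂ) (f : ℂ⟦X⟧) :
    C c * rescale a f = rescale a (C c * f) := by
  rw [map_mul, rescale_C_eq]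

lemma algebraMap_div_fact (q : ℚ) (n : ℕ) :
    (algebraMap ℚ ℂ) (q / n.factorial) = (q : ℂ) / (n.factorial : ℂ) := by
  rw [map_div₀, map_natCast, eq_ratCast]

lemma sin_exp_repr :
    C (2 * Complex.I) * PowerSeries.sin ℂ
      = rescale Complex.I (exp ℂ) - rescale (-Complex.I) (exp ℂ) := by
  ext n
  rw [map_sub, coeff_C_mul, coeff_rescale, coeff_rescale, coeff_exp]
  simp only [PowerSeries.sin, coeff_mk]
  rcases Nat.even_or_odd n with he | ⟨k, hk⟩
  · rw [if_pos he]
    have : (-Complex.I) ^ n = Complex.I ^ n := by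
      rw [neg_pow, he.neg_one_pow, one_mul]
    rw [this]; ring
  · rw [if_neg (by simp [hk, Nat.odd_iff.mp ⟨k, hk⟩, Nat.even_iff]), algebraMap_div_fact]
    subst hk
    have h1 : Complex.I ^ (2 * k + 1) = (-1 : ℂ) ^ k * Complex.I := by
      rw [pow_succ, pow_mul, Complex.I_sq]
    have h2 : (-Complex.I) ^ (2 * k + 1) = -((-1 : ℂ) ^ k * Complex.I) := by
      rw [neg_pow, ← h1, pow_succ, pow_mul]; ring_nf
    have h3 : (2 * k + 1) / 2 = k := by omega
    rw [h1, h2, h3]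
    push_cast
    ring

lemma cos_exp_repr :
    C 2 * PowerSeries.cos ℂ
      = rescale Complex.I (exp ℂ) + rescale (-Complex.I) (exp ℂ) := by
  ext n
  rw [map_add, coeff_C_mul, coeff_rescale, coeff_rescale, coeff_exp]
  simp only [PowerSeries.cos, coeff_mk]
  rcases Nat.even_or_odd n with ⟨k, hk⟩ | ho
  · rw [if_pos ⟨k, hk⟩, algebraMap_div_fact]
    subst hk
    have h1 : Complex.I ^ (k + k) = (-1 : ℂ) ^ k := by
      rw [← two_mul, pow_mul, Complex.I_sq]
    have h2 : (-Complex.I) ^ (k + k) = (-1 : ℂ) ^ k := by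
      rw [neg_pow, ← two_mul, pow_mul, neg_one_sq, one_pow, one_mul, pow_mul, Complex.I_sq]
    have h3 : (k + k) / 2 = k := by omega
    rw [h1, h2, h3]
    push_cast
    ring
  · rw [if_neg (by simpa [Nat.even_iff, Nat.odd_iff.mp ho] using (by omega : ¬ Even n))]
    have : (-Complex.I) ^ n = -(Complex.I ^ n) := by
      rw [neg_pow, ho.neg_one_pow]; ring
    rw [this]; ring

lemma sin_double (z : ℂ) : sinS (2 * z) = 2 * sinS z * cosS z := by
  have hC : (C (2 * Complex.I)) ≠ 0 := fun h =>
    (mul_ne_zero two_ne_zero Complex.I_ne_zero) (by simpa using congrArg (constantCoeff) h)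
  apply mul_left_cancel₀ hC
  have hL : C (2 * Complex.I) * sinS (2 * z)
      = rescale (Complex.I * (2 * z)) (exp ℂ) - rescale (-Complex.I * (2 * z)) (exp ℂ) := by
    unfold sinS
    rw [rescale_C_mul, sin_exp_repr, map_sub, rescale_rescale, rescale_rescale]
  have hs : C (2 * Complex.I) * sinS z
      = rescale (Complex.I * z) (exp ℂ) - rescale (-Complex.I * z) (exp ℂ) := by
    unfold sinS
    rw [rescale_C_mul, sin_exp_repr, map_sub, rescale_rescale, rescale_rescale]
  have hc : C 2 * cosS z
      = rescale (Complex.I * z) (exp ℂ) + rescale (-Complex.I * z) (exp ℂ) := by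
    unfold cosS
    rw [rescale_C_mul, cos_exp_repr, map_add, rescale_rescale, rescale_rescale]
  have h2 : (2 : ℂ⟦X⟧) = C 2 := (map_ofNat C 2).symm
  have key : (C (2 * Complex.I) * sinS z) * (C 2 * cosS z)
      = rescale (Complex.I * (2 * z)) (exp ℂ) - rescale (-Complex.I * (2 * z)) (exp ℂ) := by
    rw [hs, hc]
    have e1 : rescale (Complex.I * z) (exp ℂ) * rescale (Complex.I * z) (exp ℂ)
        = rescale (Complex.I * (2 * z)) (exp ℂ) := by
      rw [exp_mul_exp_eq_exp_add]; ring_nf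
    have e2 : rescale (-Complex.I * z) (exp ℂ) * rescale (-Complex.I * z) (exp ℂ)
        = rescale (-Complex.I * (2 * z)) (exp ℂ) := by
      rw [exp_mul_exp_eq_exp_add]; ring_nf
    calc (rescale (Complex.I * z) (exp ℂ) - rescale (-Complex.I * z) (exp ℂ))
          * (rescale (Complex.I * z) (exp ℂ) + rescale (-Complex.I * z) (exp ℂ))
        = rescale (Complex.I * z) (exp ℂ) * rescale (Complex.I * z) (exp ℂ)
          - rescale (-Complex.I * z) (exp ℂ) * rescale (-Complex.I * z) (exp ℂ) := by ring
      _ = _ := by rw [e1, e2]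
  calc C (2 * Complex.I) * sinS (2 * z)
      = rescale (Complex.I * (2 * z)) (exp ℂ) - rescale (-Complex.I * (2 * z)) (exp ℂ) := hL
    _ = (C (2 * Complex.I) * sinS z) * (C 2 * cosS z) := key.symm
    _ = C (2 * Complex.I) * (2 * sinS z * cosS z) := by rw [← h2]; ring

theorem stmt10 (lam mu : ℂ) (hlm : lam + mu ≠ 0) (U : ℂ⟦X⟧) (hU : PowerSeries.coeff 0 U ≠ 0)
    (v β n : ℕ) (x z : ℂ) :
    ∑ r ∈ Finset.range (n + 1),
        (n.choose r : ℂ) * Bpoly lam mu v (n - r) x * TBs lam mu U β r x (2 * z)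
      = 2 * ∑ r ∈ Finset.range (n + 1),
          (n.choose r : ℂ) * Bs lam mu v r x z * TBc lam mu U β (n - r) x z := by
  set A : ℂ⟦X⟧ := bker lam mu ^ v * expS x with hA
  set B : ℂ⟦X⟧ := bker lam mu ^ β * expS x * U * sinS (2 * z) with hB
  set C' : ℂ⟦X⟧ := bker lam mu ^ β * expS x * U * cosS z with hC'
  set D : ℂ⟦X⟧ := bker lam mu ^ v * expS x * sinS z with hD
  have hLHS : ∑ r ∈ Finset.range (n + 1),
      (n.choose r : ℂ) * Bpoly lam mu v (n - r) x * TBs lam mu U β r x (2 * z)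
      = n.factorial * coeff n (B * A) := by
    rw [← conv_aux B A n]
    refine Finset.sum_congr rfl fun r _ => ?_
    simp only [Bpoly, TBs, ← hA, ← hB]
    ring
  have hRHS : ∑ r ∈ Finset.range (n + 1),
      (n.choose r : ℂ) * Bs lam mu v r x z * TBc lam mu U β (n - r) x z
      = n.factorial * coeff n (D * C') := by
    rw [← conv_aux D C' n]
    refine Finset.sum_congr rfl fun r _ => ?_
    simp only [Bs, TBc, ← hC', ← hD]
  rw [hLHS, hRHS]
  have hser : B * A = 2 * (D * C') := by
    rw [hA, hB, hC', hD, sin_double]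
    ring
  have h2 : coeff n (2 * (D * C')) = 2 * coeff n (D * C') := by
    rw [show (2 : ℂ⟦X⟧) = C 2 from (map_ofNat C 2).symm, coeff_C_mul]
  rw [hser, h2]
  ring
end

section
/- For every n ∈ ℕ, v ∈ ℕ₀ and x ∈ ℂ, the partial derivative with respect to z of the polynomial function z ↦ _Tℬ^{(c,v)}_{n,μ}(x,z;λ) satisfies ∂/∂z [_Tℬ^{(c,v)}_{n,μ}(x,z;λ)] = −n · _Tℬ^{(s,v)}_{n−1,μ}(x,z;λ) for all z ∈ ℂ. -/
/-!
Parametric kinds of generalized Apostol–Bernoulli polynomials (Özat–Çekim–Kızılateş–Qi).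
All generating functions are formal power series in `t` over `ℂ`; each polynomial family is
`n!` times the `n`-th coefficient of its generating series.
-/

open PowerSeries

open Nat in
lemma key (k : ℕ) : ((k:ℂ)+1) * coeff (k+1) (cos ℂ) = - coeff k (sin ℂ) := by
  simp only [PowerSeries.cos, PowerSeries.sin, coeff_mk]
  rcases Nat.even_or_odd k with hk | hk
  · rw [if_neg (by simpa using hk.add_one), if_pos hk]
    simp
  · obtain ⟨m, rfl⟩ := hk
    rw [if_pos (by exact ⟨m+1, by ring⟩), if_neg (by simp [Nat.even_iff])]
    have h1 : (2*m+1+1)/2 = m+1 := by omega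
    have h2 : (2*m+1)/2 = m := by omega
    rw [h1, h2]
    simp only [eq_ratCast]
    push_cast
    have hf : ((2*m+1+1)! : ℂ) = (2*(m:ℂ)+1+1) * (2*m+1)! := by
      rw [show 2*m+1+1 = (2*m+1)+1 from rfl, Nat.factorial_succ]; push_cast; ring
    have hne : ((2*m+1)! : ℂ) ≠ 0 := by exact_mod_cast (Nat.factorial_ne_zero _)
    have hne2 : (2*(m:ℂ)+1+1) ≠ 0 := by
      have : ((2*m+1+1 : ℕ) : ℂ) ≠ 0 := Nat.cast_ne_zero.mpr (by omega)
      push_cast at this; exact this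
    rw [hf, pow_succ]
    field_simp

theorem stmt13 (lam mu : ℂ) (hlm : lam + mu ≠ 0) (U : ℂ⟦X⟧) (hU : PowerSeries.coeff 0 U ≠ 0)
    (n : ℕ) (hn : 1 ≤ n) (v : ℕ) (x : ℂ) (z : ℂ) :
    deriv (fun z : ℂ => TBc lam mu U v n x z) z
      = -(n : ℂ) * TBs lam mu U v (n - 1) x z := by
  classical
  set A : ℂ⟦X⟧ := bker lam mu ^ v * expS x * U with hA
  have hrep : ∀ (m : ℕ) (f : ℂ⟦X⟧) (w : ℂ),
      coeff m (A * rescale w f)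
        = ∑ k ∈ Finset.range (m+1), w^k * coeff k f * coeff (m-k) A := by
    intro m f w
    rw [mul_comm, coeff_mul, Finset.Nat.sum_antidiagonal_eq_sum_range_succ_mk]
    simp [coeff_rescale]
  have hfun : (fun z : ℂ => TBc lam mu U v n x z)
      = fun z : ℂ => ∑ k ∈ Finset.range (n+1),
          ((n.factorial : ℂ) * coeff k (PowerSeries.cos ℂ) * coeff (n-k) A) * z^k := by
    funext w
    show (n.factorial : ℂ) * coeff n (A * cosS w) = _
    rw [cosS, hrep, Finset.mul_sum]
    exact Finset.sum_congr rfl fun k _ => by ring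
  rw [hfun]
  have hd : HasDerivAt
      (fun z : ℂ => ∑ k ∈ Finset.range (n+1),
          ((n.factorial : ℂ) * coeff k (PowerSeries.cos ℂ) * coeff (n-k) A) * z^k)
      (∑ k ∈ Finset.range (n+1),
          ((n.factorial : ℂ) * coeff k (PowerSeries.cos ℂ) * coeff (n-k) A)
            * ((k : ℂ) * z^(k-1))) z :=
    HasDerivAt.fun_sum fun k _ => (hasDerivAt_pow k z).const_mul _
  rw [hd.deriv]
  have hTBs : TBs lam mu U v (n-1) x z
      = ((n-1).factorial : ℂ) * ∑ k ∈ Finset.range n,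
          z^k * coeff k (PowerSeries.sin ℂ) * coeff (n-1-k) A := by
    show ((n-1).factorial : ℂ) * coeff (n-1) (A * sinS z) = _
    rw [sinS, hrep, Nat.sub_add_cancel hn]
  rw [hTBs, Finset.sum_range_succ']
  have hF : (n : ℂ) * ((n-1).factorial : ℂ) = (n.factorial : ℂ) := by
    rw_mod_cast [Nat.mul_factorial_pred (by omega)]
  rw [Finset.mul_sum, Finset.mul_sum]
  simp only [Nat.cast_zero, zero_mul, mul_zero, add_zero]
  refine Finset.sum_congr rfl fun i _ => ?_
  have hsub : n - (i+1) = n - 1 - i := by omega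
  rw [hsub]
  push_cast
  have K := key i
  linear_combination ((n.factorial:ℂ) * coeff (n-1-i) A * z^i) * K
    + (z^i * coeff i (PowerSeries.sin ℂ) * coeff (n-1-i) A) * hF
end

section
/- For every n ∈ ℕ, v ∈ ℕ₀ and x ∈ ℂ, the partial derivative with respect to z of the polynomial function z ↦ _Tℬ^{(s,v)}_{n,μ}(x,z;λ) satisfies ∂/∂z [_Tℬ^{(s,v)}_{n,μ}(x,z;λ)] = n · _Tℬ^{(c,v)}_{n−1,μ}(x,z;λ) for all z ∈ ℂ. -/
/-!
Parametric kinds of generalized Apostol–Bernoulli polynomials (Özat–Çekim–Kızılateş–Qi).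
All generating functions are formal power series in `t` over `ℂ`; each polynomial family is
`n!` times the `n`-th coefficient of its generating series.
-/

open PowerSeries

theorem sincos (k : ℕ) :
    ((k+1 : ℕ) : ℂ) * PowerSeries.coeff (k+1) (PowerSeries.sin ℂ)
      = PowerSeries.coeff k (PowerSeries.cos ℂ) := by
  rw [PowerSeries.sin, PowerSeries.cos, PowerSeries.coeff_mk, PowerSeries.coeff_mk]
  rcases Nat.even_or_odd k with hk | hk
  · obtain ⟨m, rfl⟩ := hk
    have he : Even (m+m) := ⟨m, rfl⟩
    rw [if_pos he, if_neg (Nat.even_add_one.not.mpr (not_not.mpr he))]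
    have h2 : (m + m + 1) / 2 = m := by omega
    have h3 : (m + m) / 2 = m := by omega
    rw [h2, h3, map_div₀, map_div₀, map_pow, map_neg, map_one, map_natCast, map_natCast]
    have hfac : (((m + m + 1).factorial : ℂ)) = ((m+m+1 : ℕ) : ℂ) * (m + m).factorial := by
      rw [Nat.factorial_succ]; push_cast; ring
    rw [hfac]
    have h1 : ((m+m+1 : ℕ) : ℂ) ≠ 0 := Nat.cast_ne_zero.mpr (by omega)
    have h4 : (((m+m).factorial : ℕ) : ℂ) ≠ 0 := Nat.cast_ne_zero.mpr (Nat.factorial_ne_zero _)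
    push_cast at h1
    field_simp
    ring_nf
    exact mul_inv_cancel₀ (Nat.cast_ne_zero.mpr (by omega))
  · rw [if_pos (Nat.even_add_one.mpr (Nat.not_even_iff_odd.mpr hk)),
      if_neg (Nat.not_even_iff_odd.mpr hk)]
    simp


theorem aux_deriv (A : ℂ⟦X⟧) (n : ℕ) (hn : 1 ≤ n) (z : ℂ) :
    deriv (fun z : ℂ => (n.factorial : ℂ) * coeff n (A * sinS z)) z
      = n * ((n-1).factorial * coeff (n-1) (A * cosS z)) := by
  have hf : (fun w : ℂ => (n.factorial : ℂ) * coeff n (A * sinS w))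
      = fun w => ∑ k ∈ Finset.range (n+1),
          (n.factorial : ℂ) * coeff k A * coeff (n-k) (PowerSeries.sin ℂ) * w ^ (n-k) := by
    funext w
    rw [PowerSeries.coeff_mul,
      Finset.Nat.sum_antidiagonal_eq_sum_range_succ (fun i j => coeff i A * coeff j (sinS w)),
      Finset.mul_sum]
    refine Finset.sum_congr rfl fun k _ => ?_
    rw [sinS, coeff_rescale]
    ring
  rw [hf, deriv_fun_sum (fun k _ => by fun_prop)]
  have hg : (n:ℂ) * ((n-1).factorial * coeff (n-1) (A * cosS z))
      = ∑ k ∈ Finset.range n,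
          (n.factorial : ℂ) * coeff k A * coeff (n-1-k) (PowerSeries.cos ℂ) * z ^ (n-1-k) := by
    rw [PowerSeries.coeff_mul,
      Finset.Nat.sum_antidiagonal_eq_sum_range_succ (fun i j => coeff i A * coeff j (cosS z)),
      Finset.mul_sum, Finset.mul_sum]
    have hn1 : n - 1 + 1 = n := by omega
    rw [Nat.succ_eq_add_one, hn1]
    refine Finset.sum_congr rfl fun k _ => ?_
    rw [cosS, coeff_rescale]
    have : (n:ℂ) * (n-1).factorial = n.factorial := by
      rw [← Nat.cast_mul, ← hn1, Nat.factorial_succ, hn1]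
    rw [← mul_assoc, ← mul_assoc, this]
    ring
  rw [hg, Finset.sum_range_succ]
  have hlast : deriv (fun w : ℂ => (n.factorial : ℂ) * coeff n A
      * coeff (n-n) (PowerSeries.sin ℂ) * w ^ (n-n)) z = 0 := by
    simp [Nat.sub_self]
  rw [hlast, add_zero]
  refine Finset.sum_congr rfl fun k hk => ?_
  have hk' : k < n := Finset.mem_range.mp hk
  have hs : n - k = (n - 1 - k) + 1 := by omega
  rw [deriv_const_mul _ (by fun_prop), deriv_pow_field, hs]
  have := sincos (n - 1 - k)
  push_cast at this ⊢
  linear_combination (↑n.factorial * (coeff k) A * z ^ (n-1-k)) * this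

theorem stmt14 (lam mu : ℂ) (hlm : lam + mu ≠ 0) (U : ℂ⟦X⟧) (hU : PowerSeries.coeff 0 U ≠ 0)
    (n : ℕ) (hn : 1 ≤ n) (v : ℕ) (x : ℂ) (z : ℂ) :
    deriv (fun z : ℂ => TBs lam mu U v n x z) z
      = n * TBc lam mu U v (n - 1) x z := by
  exact aux_deriv (bker lam mu ^ v * expS x * U) n hn z
end

section
/- Let m, n ∈ ℕ with n ≥ m, v ∈ ℕ₀ and α, β, x, z ∈ ℂ. Then the m-th partial derivative with respect to x of the function x ↦ _Tℬ^{(s,v)}_{n,μ}(x+α, z+β;λ) equals Σ_{r=m}^{n} m! · binomial(n,r) · binomial(r,m) · [ _Tℬ^{(s,v)}_{r−m,μ}(x,z;λ) · C_{n−r}(α,β) + _Tℬ^{(c,v)}_{r−m,μ}(x,z;λ) · S_{n−r}(α,β) ]. -/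
/-!
Parametric kinds of generalized Apostol–Bernoulli polynomials (Özat–Çekim–Kızılateş–Qi).
All generating functions are formal power series in `t` over `ℂ`; each polynomial family is
`n!` times the `n`-th coefficient of its generating series.
-/

open PowerSeries

lemma expS_add (a b : ℂ) : expS (a + b) = expS a * expS b :=
  (exp_mul_exp_eq_exp_add a b).symm

lemma coeff_expS (x : ℂ) (n : ℕ) : coeff n (expS x) = x ^ n * ((n.factorial : ℂ))⁻¹ := by
  simp [expS, coeff_rescale, coeff_exp]

lemma sinS_eq (z : ℂ) :
    sinS z = C (1/(2*Complex.I)) * (expS (Complex.I*z) - expS (-(Complex.I*z))) := by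
  ext n
  rw [PowerSeries.coeff_C_mul, map_sub]
  simp only [sinS, expS, coeff_rescale, coeff_exp, PowerSeries.sin, coeff_mk]
  rcases Nat.even_or_odd n with he | ho
  · rw [if_pos he, he.neg_pow]
    ring
  · rw [if_neg (Nat.not_even_iff_odd.mpr ho)]
    obtain ⟨k, hk⟩ := ho
    subst hk
    rw [Odd.neg_pow ⟨k, rfl⟩]
    have h1 : (Complex.I * z) ^ (2*k+1) = (-1)^k * Complex.I * z ^ (2*k+1) := by
      rw [mul_pow, pow_succ, pow_mul, Complex.I_sq]
    rw [h1]
    have h2 : ((2*k+1)/2 : ℕ) = k := by omega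
    rw [h2]
    push_cast [map_div₀]
    have hf : ((2*k+1).factorial : ℂ) ≠ 0 := Nat.cast_ne_zero.mpr (Nat.factorial_ne_zero _)
    field_simp
    ring

lemma cosS_eq (z : ℂ) :
    cosS z = C (1/2) * (expS (Complex.I*z) + expS (-(Complex.I*z))) := by
  ext n
  rw [PowerSeries.coeff_C_mul, map_add]
  simp only [cosS, expS, coeff_rescale, coeff_exp, PowerSeries.cos, coeff_mk]
  rcases Nat.even_or_odd n with he | ho
  · rw [if_pos he, he.neg_pow]
    obtain ⟨k, hk⟩ := he
    have hk2 : n = 2*k := by omega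
    subst hk2
    have h1 : (Complex.I * z) ^ (2*k) = (-1)^k * z ^ (2*k) := by
      rw [mul_pow, pow_mul, Complex.I_sq]
    rw [h1]
    have h2 : ((2*k)/2 : ℕ) = k := by omega
    rw [h2]
    push_cast [map_div₀]
    ring
  · rw [if_neg (Nat.not_even_iff_odd.mpr ho), Odd.neg_pow ho]
    ring

lemma sinS_add (a b : ℂ) : sinS (a+b) = sinS a * cosS b + cosS a * sinS b := by
  have hI : Complex.I * (a + b) = Complex.I*a + Complex.I*b := by ring
  have hI2 : -(Complex.I*a + Complex.I*b) = -(Complex.I*a) + -(Complex.I*b) := by ring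
  rw [sinS_eq, sinS_eq, sinS_eq, cosS_eq, cosS_eq, hI, hI2, expS_add, expS_add]
  have hc : (C (1/2) : ℂ⟦X⟧) * 2 = 1 := by
    rw [← map_ofNat (C (R := ℂ)) 2, ← map_mul]
    norm_num
  linear_combination (-(C (1/(2*Complex.I))) * (expS (Complex.I*a)*expS (Complex.I*b)
    - expS (-(Complex.I*a))*expS (-(Complex.I*b)))) * hc

lemma coeff_expS_mul (G : ℂ⟦X⟧) (n : ℕ) (x : ℂ) :
    coeff n (expS x * G)
      = ∑ j ∈ Finset.range (n+1), x ^ j * (((j.factorial : ℂ))⁻¹ * coeff (n - j) G) := by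
  rw [coeff_mul, Finset.Nat.sum_antidiagonal_eq_sum_range_succ_mk]
  simp [coeff_expS, mul_assoc]

lemma hasDerivAt_coeff (G : ℂ⟦X⟧) (n : ℕ) (c x : ℂ) :
    HasDerivAt (fun x => c * coeff (n+1) (expS x * G)) (c * coeff n (expS x * G)) x := by
  simp only [coeff_expS_mul]
  refine HasDerivAt.const_mul c ?_
  have H : HasDerivAt
      (fun x : ℂ => ∑ j ∈ Finset.range (n+2), x ^ j * (((j.factorial : ℂ))⁻¹ * coeff (n+1-j) G))
      (∑ j ∈ Finset.range (n+2), ((j:ℂ) * x ^ (j-1)) * (((j.factorial : ℂ))⁻¹ * coeff (n+1-j) G)) x := by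
    refine HasDerivAt.fun_sum fun j _ => ?_
    exact (hasDerivAt_pow j x).mul_const _
  have he : (∑ j ∈ Finset.range (n+2), ((j:ℂ) * x ^ (j-1)) * (((j.factorial : ℂ))⁻¹ * coeff (n+1-j) G))
      = ∑ j ∈ Finset.range (n+1), x ^ j * (((j.factorial : ℂ))⁻¹ * coeff (n-j) G) := by
    rw [Finset.sum_range_succ']
    simp only [Nat.cast_zero, zero_mul, add_zero]
    refine Finset.sum_congr rfl fun i _ => ?_
    have h1 : (n + 1 - (i+1)) = n - i := by omega
    have h2 : ((i+1).factorial : ℂ) = (i+1) * (i.factorial : ℂ) := by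
      rw [Nat.factorial_succ]; push_cast; ring
    rw [h1, h2]
    have hi : ((i:ℂ)+1) ≠ 0 := by
      exact_mod_cast Nat.succ_ne_zero i
    have hf : ((i.factorial : ℂ)) ≠ 0 := Nat.cast_ne_zero.mpr (Nat.factorial_ne_zero _)
    field_simp
    rw [show i + 1 - 1 = i by omega]; push_cast
    ring
  rw [← he]
  exact H

lemma iter_deriv (G : ℂ⟦X⟧) (c : ℂ) :
    ∀ m n : ℕ, m ≤ n → iteratedDeriv m (fun x => c * coeff n (expS x * G))
      = fun x => c * coeff (n - m) (expS x * G) := by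
  intro m
  induction m with
  | zero => intro n _; simp
  | succ m ih =>
    intro n hmn
    obtain ⟨k, rfl⟩ : ∃ k, n = k + 1 := ⟨n - 1, by omega⟩
    rw [iteratedDeriv_succ']
    have hd : deriv (fun x => c * coeff (k+1) (expS x * G))
        = fun x => c * coeff k (expS x * G) :=
      funext fun x => (hasDerivAt_coeff G k c x).deriv
    rw [hd, ih k (by omega)]
    have : k - m = k + 1 - (m+1) := by omega
    rw [this]

theorem stmt15 (lam mu : ℂ) (hlm : lam + mu ≠ 0) (U : ℂ⟦X⟧) (hU : PowerSeries.coeff 0 U ≠ 0)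
    (m n : ℕ) (hm : 1 ≤ m) (hmn : m ≤ n) (v : ℕ) (α β x z : ℂ) :
    iteratedDeriv m (fun x : ℂ => TBs lam mu U v n (x + α) (z + β)) x
      = ∑ r ∈ Finset.Icc m n,
          (m.factorial : ℂ) * (n.choose r : ℂ) * (r.choose m : ℂ) *
            (TBs lam mu U v (r - m) x z * Cpoly (n - r) α β
              + TBc lam mu U v (r - m) x z * Spoly (n - r) α β) := by
  classical
  set N := n - m with hN
  set G : ℂ⟦X⟧ := bker lam mu ^ v * expS α * U * sinS (z + β) with hG
  have hfun : (fun x : ℂ => TBs lam mu U v n (x + α) (z + β))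
      = fun x => (n.factorial : ℂ) * coeff n (expS x * G) := by
    funext y
    simp only [TBs, hG]
    congr 2
    rw [expS_add]
    ring
  rw [hfun, iter_deriv G (n.factorial : ℂ) m n hmn]
  have hsplit : expS x * G
      = (bker lam mu ^ v * expS x * U * sinS z) * (expS α * cosS β)
        + (bker lam mu ^ v * expS x * U * cosS z) * (expS α * sinS β) := by
    rw [hG, sinS_add]
    ring
  beta_reduce
  rw [hsplit, map_add, coeff_mul, coeff_mul,
    Finset.Nat.sum_antidiagonal_eq_sum_range_succ_mk,
    Finset.Nat.sum_antidiagonal_eq_sum_range_succ_mk,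
    ← Finset.Ico_add_one_right_eq_Icc, Finset.sum_Ico_eq_sum_range,
    show n + 1 - m = N + 1 from by omega,
    mul_add, Finset.mul_sum, Finset.mul_sum, ← Finset.sum_add_distrib]
  refine Finset.sum_congr rfl fun k hk => ?_
  have hkN : k ≤ N := by
    have := Finset.mem_range.mp hk
    omega
  have e1 : m + k - m = k := by omega
  have e2 : n - (m + k) = N - k := by omega
  rw [e1, e2]
  simp only [TBs, TBc, Cpoly, Spoly]
  have h1 : (m+k).choose m * m.factorial * k.factorial = (m+k).factorial := by
    have h := Nat.choose_mul_factorial_mul_factorial (Nat.le_add_right m k)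
    rwa [Nat.add_sub_cancel_left] at h
  have h2 : n.choose (m+k) * (m+k).factorial * (N - k).factorial = n.factorial := by
    have h := Nat.choose_mul_factorial_mul_factorial (show m + k ≤ n by omega)
    rwa [e2] at h
  have hnat : m.factorial * (n.choose (m+k)) * ((m+k).choose m) * k.factorial
      * (N-k).factorial = n.factorial := by
    rw [← h2, ← h1]
    ring
  have hcast : (m.factorial : ℂ) * (n.choose (m+k) : ℂ) * ((m+k).choose m : ℂ)
      * (k.factorial : ℂ) * ((N-k).factorial : ℂ) = (n.factorial : ℂ) := by
    exact_mod_cast congrArg (Nat.cast : ℕ → ℂ) hnat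
  set a := coeff k (bker lam mu ^ v * expS x * U * sinS z)
  set b := coeff (N - k) (expS α * cosS β)
  set c := coeff k (bker lam mu ^ v * expS x * U * cosS z)
  set d := coeff (N - k) (expS α * sinS β)
  linear_combination (-(a * b + c * d)) * hcast
end

section
/- Let v, α ∈ ℕ₀, let m, n ∈ ℕ with n ≥ m, and let x, k, z ∈ ℂ. Then the m-th partial derivative with respect to k of the function k ↦ _Tℬ^{(s,v+α)}_{n,μ}(x+k,z;λ) equals (m!/2^v) · Σ_{r=m}^{n} binomial(n,r) · binomial(r,m) · 𝒢^{(v)}_{r−m,μ}(x;λ) · _Tℬ^{(s,α)}_{n−r,μ}(k,z;λ). -/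
/-!
Parametric kinds of generalized Apostol–Bernoulli polynomials (Özat–Çekim–Kızılateş–Qi).
All generating functions are formal power series in `t` over `ℂ`; each polynomial family is
`n!` times the `n`-th coefficient of its generating series.
-/

open PowerSeries

noncomputable section AuxStmt19

open Finset

/-- auxiliary polynomial sum -/
def Saux19 (B : ℂ⟦X⟧) (n : ℕ) (k : ℂ) : ℂ :=
  ∑ p ∈ range (n + 1), k ^ p / p.factorial * coeff (n - p) B

lemma coeff_expS19 (k : ℂ) (i : ℕ) : coeff i (expS k) = k ^ i / i.factorial := by
  simp [expS, coeff_rescale, coeff_exp, div_eq_mul_inv]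

lemma coeff_mul_expS19 (B : ℂ⟦X⟧) (k : ℂ) (n : ℕ) :
    coeff n (expS k * B) = Saux19 B n k := by
  rw [coeff_mul, Finset.Nat.sum_antidiagonal_eq_sum_range_succ_mk, Saux19]
  simp [coeff_expS19]

lemma diff_Saux19 (B : ℂ⟦X⟧) (n : ℕ) : Differentiable ℂ (fun k => Saux19 B n k) := by
  unfold Saux19
  exact Differentiable.fun_sum (fun i _ => by fun_prop)

lemma deriv_Saux19 (B : ℂ⟦X⟧) (n : ℕ) :
    deriv (fun k => Saux19 B (n + 1) k) = fun k => Saux19 B n k := by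
  funext k
  show deriv (fun k => ∑ p ∈ range (n + 2), k ^ p / p.factorial * coeff (n + 1 - p) B) k = _
  rw [deriv_fun_sum (fun i _ => by fun_prop), Finset.sum_range_succ' _ (n + 1)]
  have key : ∀ p, deriv (fun k : ℂ =>
      k ^ (p + 1) / ((p + 1).factorial : ℂ) * coeff (n + 1 - (p + 1)) B) k
      = k ^ p / p.factorial * coeff (n - p) B := by
    intro p
    have hnp : n + 1 - (p + 1) = n - p := by omega
    rw [hnp]
    simp only [deriv_mul_const_field', deriv_div_const, deriv_pow_field]
    rw [Nat.factorial_succ]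
    have h1 : ((p.factorial : ℂ)) ≠ 0 := Nat.cast_ne_zero.2 p.factorial_ne_zero
    have h2 : ((p : ℂ) + 1) ≠ 0 := Nat.cast_add_one_ne_zero p
    push_cast
    field_simp
  rw [Finset.sum_congr rfl (fun p _ => key p)]
  simp [Saux19]

lemma iter_Saux19 (B : ℂ⟦X⟧) (c : ℂ) :
    ∀ m n : ℕ, m ≤ n →
      iteratedDeriv m (fun k => c * Saux19 B n k) = fun k => c * Saux19 B (n - m) k := by
  intro m
  induction m with
  | zero => intro n _; simp
  | succ m ih =>
    intro n hmn
    rw [iteratedDeriv_succ']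
    have hd : deriv (fun k => c * Saux19 B n k) = fun k => c * Saux19 B (n - 1) k := by
      obtain ⟨n', rfl⟩ : ∃ n', n = n' + 1 := ⟨n - 1, by omega⟩
      funext k
      rw [deriv_const_mul c ((diff_Saux19 B (n' + 1)) k), deriv_Saux19]
      simp
    rw [hd, ih (n - 1) (by omega)]
    have h : n - 1 - m = n - (m + 1) := by omega
    rw [h]

end AuxStmt19

theorem stmt19 (lam mu : ℂ) (hlm : lam + mu ≠ 0) (U : ℂ⟦X⟧) (hU : PowerSeries.coeff 0 U ≠ 0)
    (v α : ℕ) (m n : ℕ) (hm : 1 ≤ m) (hmn : m ≤ n) (x k z : ℂ) :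
    iteratedDeriv m (fun k : ℂ => TBs lam mu U (v + α) n (x + k) z) k
      = (m.factorial : ℂ) / 2 ^ v *
          ∑ r ∈ Finset.Icc m n,
            (n.choose r : ℂ) * (r.choose m : ℂ) * Gpoly lam mu v (r - m) x *
              TBs lam mu U α (n - r) k z := by
  classical
  set bk := bker lam mu with hbk
  set P : ℂ⟦X⟧ := bk ^ v * expS x with hP
  set Q : ℂ⟦X⟧ := bk ^ α * U * sinS z with hQ
  set B : ℂ⟦X⟧ := P * Q with hB
  -- rewrite the LHS function
  have hfun : (fun k : ℂ => TBs lam mu U (v + α) n (x + k) z)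
      = fun k => (n.factorial : ℂ) * Saux19 B n k := by
    funext k
    rw [TBs]
    congr 1
    rw [← coeff_mul_expS19]
    congr 1
    have hexp : expS (x + k) = expS x * expS k := by
      rw [expS, expS, expS, PowerSeries.exp_mul_exp_eq_exp_add]
    rw [hexp, hB, hP, hQ, pow_add]
    ring
  rw [hfun, iter_Saux19 B (n.factorial : ℂ) m n hmn]
  -- expand Saux19 B (n-m) via coeff_mul
  have hSB : Saux19 B (n - m) k
      = ∑ j ∈ Finset.range (n - m + 1), coeff j P * Saux19 Q (n - m - j) k := by
    rw [← coeff_mul_expS19, hB, show expS k * (P * Q) = P * (expS k * Q) by ring,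
      coeff_mul, Finset.Nat.sum_antidiagonal_eq_sum_range_succ_mk]
    exact Finset.sum_congr rfl fun j _ => by rw [coeff_mul_expS19]
  -- Gpoly in terms of P
  have hG : ∀ s : ℕ, Gpoly lam mu v s x = (s.factorial : ℂ) * (2 ^ v * coeff s P) := by
    intro s
    rw [Gpoly, hP, hbk, bker]
    congr 1
    rw [show (C 2 * X * (C lam * exp ℂ + C mu)⁻¹) = C 2 * (X * (C lam * exp ℂ + C mu)⁻¹) from by ring,
      mul_pow, ← map_pow, mul_assoc, coeff_C_mul]
  -- TBs in terms of Q
  have hT : ∀ p : ℕ, TBs lam mu U α p k z = (p.factorial : ℂ) * Saux19 Q p k := by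
    intro p
    rw [TBs, ← coeff_mul_expS19]
    congr 2
    rw [hQ, hbk]; ring
  simp only
  rw [hSB, Finset.mul_sum]
  rw [show Finset.Icc m n = Finset.Ico m (n + 1) from (Finset.Ico_add_one_right_eq_Icc m n).symm,
    Finset.sum_Ico_eq_sum_range]
  have hrange : n + 1 - m = n - m + 1 := by omega
  rw [hrange, Finset.mul_sum]
  refine Finset.sum_congr rfl fun j hj => ?_
  have hjle : j ≤ n - m := by simpa [Nat.lt_succ_iff] using Finset.mem_range.mp hj
  rw [hG (m + j - m), hT (n - (m + j))]
  have h1 : m + j - m = j := by omega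
  have h2 : n - (m + j) = n - m - j := by omega
  rw [h1, h2]
  have hnat : m.factorial * ((n.choose (m + j)) * ((m + j).choose m) * j.factorial * (n - m - j).factorial) = n.factorial := by
    have e1 : (m + j).choose m * m.factorial * j.factorial = (m + j).factorial := by
      have := Nat.choose_mul_factorial_mul_factorial (Nat.le_add_right m j)
      simpa using this
    have e2 : n.choose (m + j) * (m + j).factorial * (n - (m + j)).factorial = n.factorial :=
      Nat.choose_mul_factorial_mul_factorial (by omega)
    rw [show n - (m + j) = n - m - j from by omega] at e2
    calc m.factorial * ((n.choose (m + j)) * ((m + j).choose m) * j.factorial * (n - m - j).factorial)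
        = n.choose (m + j) * ((m + j).choose m * m.factorial * j.factorial) * (n - m - j).factorial := by ring
      _ = n.choose (m + j) * (m + j).factorial * (n - m - j).factorial := by rw [e1]
      _ = n.factorial := e2
  have hc : (m.factorial * ((n.choose (m + j)) * ((m + j).choose m) * j.factorial * (n - m - j).factorial) : ℂ) = (n.factorial : ℂ) := by
    exact_mod_cast congrArg (Nat.cast : ℕ → ℂ) hnat
  have h2v : (2 : ℂ) ^ v ≠ 0 := pow_ne_zero v two_ne_zero
  field_simp
  linear_combination (-(coeff j P * Saux19 Q (n - m - j) k)) * hc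
end
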